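/- For every d > 0 and every K > K_m, the projective cubic curve with homogeneous equation f(x,y,t) = x·y·(x+y) + (x+y)·t² + d·t³ − K·x·y·t = 0 has no real singular point: there is no (x,y,t) ∈ ℝ³ \ {(0,0,0)} at which all three partial derivatives ∂f/∂x, ∂f/∂y, ∂f/∂t vanish simultaneously. -/

import Mathlib

noncomputable def fhom (d K : ℝ) (x y t : ℝ) : ℝ :=
  x * y * (x + y) + (x + y) * t ^ 2 + d * t ^ 3 - K * x * y * t

lemma deriv_fx (d K x y t : ℝ) :
    deriv (fun s : ℝ => fhom d K s y t) x = 2*x*y + y^2 + t^2 - K*y*t := by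
  have h : (fun s : ℝ => fhom d K s y t)
      = fun s => y*s^2 + (y^2 + t^2 - K*y*t)*s + (y*t^2 + d*t^3) := by
    funext s; simp only [fhom]; ring
  rw [h]
  have H := (((hasDerivAt_pow 2 x).const_mul y).add
    ((hasDerivAt_id' (x := x)).const_mul (y^2 + t^2 - K*y*t))).add_const (y*t^2 + d*t^3)
  erw [H.deriv]
  push_cast
  ring

lemma deriv_fy (d K x y t : ℝ) :
    deriv (fun s : ℝ => fhom d K x s t) y = x^2 + 2*x*y + t^2 - K*x*t := by
  have h : (fun s : ℝ => fhom d K x s t)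
      = fun s => x*s^2 + (x^2 + t^2 - K*x*t)*s + (x*t^2 + d*t^3) := by
    funext s; simp only [fhom]; ring
  rw [h]
  have H := (((hasDerivAt_pow 2 y).const_mul x).add
    ((hasDerivAt_id' (x := y)).const_mul (x^2 + t^2 - K*x*t))).add_const (x*t^2 + d*t^3)
  erw [H.deriv]
  push_cast
  ring

lemma deriv_ft (d K x y t : ℝ) :
    deriv (fun s : ℝ => fhom d K x y s) t = 2*(x+y)*t + 3*d*t^2 - K*x*y := by
  have h : (fun s : ℝ => fhom d K x y s)
      = fun s => d*s^3 + (x+y)*s^2 + (-(K*x*y))*s + x*y*(x+y) := by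
    funext s; simp only [fhom]; ring
  rw [h]
  have H := ((((hasDerivAt_pow 3 t).const_mul d).add
    ((hasDerivAt_pow 2 t).const_mul (x+y))).add
    ((hasDerivAt_id' (x := t)).const_mul (-(K*x*y)))).add_const (x*y*(x+y))
  erw [H.deriv]
  push_cast
  ring

theorem stmt_5 (d l : ℝ) (hd : 0 < d) (hl : 0 < l) (hl3 : l ^ 3 - l - d = 0)
    (K : ℝ) (hK : 3 * l + 1 / l < K) :
    ¬ ∃ x y t : ℝ, (x, y, t) ≠ ((0 : ℝ), (0 : ℝ), (0 : ℝ)) ∧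
      deriv (fun s : ℝ => fhom d K s y t) x = 0 ∧
      deriv (fun s : ℝ => fhom d K x s t) y = 0 ∧
      deriv (fun s : ℝ => fhom d K x y s) t = 0 := by
  have hK0 : 0 < K := lt_trans (by positivity) hK
  rintro ⟨x, y, t, hne, h1, h2, h3⟩
  rw [deriv_fx] at h1
  rw [deriv_fy] at h2
  rw [deriv_ft] at h3
  have hne' : ¬ (x = 0 ∧ y = 0 ∧ t = 0) := by
    intro ⟨hx, hy, ht⟩; exact hne (by simp [hx, hy, ht])
  have hfac : (y - x) * (x + y - K * t) = 0 := by linear_combination h1 - h2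
  rcases mul_eq_zero.mp hfac with hcase | hcase
  · -- y = x
    have e1 : 3 * x ^ 2 + t ^ 2 - K * x * t = 0 := by
      linear_combination h1 + (K * t - (3 * x + y)) * hcase
    have e3 : 4 * x * t + 3 * d * t ^ 2 - K * x ^ 2 = 0 := by
      linear_combination h3 + (K * x - 2 * t) * hcase
    have ht : t ≠ 0 := by
      intro ht0
      have hx2 : x ^ 2 = 0 := by
        linear_combination e1 / 3 + (K * x / 3 - t / 3) * ht0
      have hx0 : x = 0 := sq_eq_zero_iff.mp hx2
      exact hne' ⟨hx0, by linarith, ht0⟩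
    have hx : x ≠ 0 := by
      intro hx0
      have ht2 : t ^ 2 = 0 := by
        linear_combination e1 + (K * t - 3 * x) * hx0
      have ht0 : t = 0 := sq_eq_zero_iff.mp ht2
      exact hne' ⟨hx0, by linarith, ht0⟩
    set u := x / t with hu
    have hxut : x = u * t := by rw [hu, div_mul_cancel₀ x ht]
    have ht2 : t ^ 2 ≠ 0 := pow_ne_zero _ ht
    have hu1 : K * u = 3 * u ^ 2 + 1 := by
      have key : (K * u - (3 * u ^ 2 + 1)) * t ^ 2 = 0 := by
        rw [hxut] at e1; linear_combination -e1
      have := (mul_eq_zero.mp key).resolve_right ht2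
      linarith
    have hu2 : K * u ^ 2 = 4 * u + 3 * d := by
      have key : (K * u ^ 2 - (4 * u + 3 * d)) * t ^ 2 = 0 := by
        rw [hxut] at e3; linear_combination -e3
      have := (mul_eq_zero.mp key).resolve_right ht2
      linarith
    have hu3 : u ^ 3 - u - d = 0 := by
      linear_combination hu2 / 3 - (u / 3) * hu1
    have hu0 : 0 < u := by
      by_contra hle
      push_neg at hle
      nlinarith [mul_nonneg hK0.le (neg_nonneg.mpr hle), sq_nonneg u]
    have hl1 : 1 < l := by
      by_contra h
      push_neg at h
      nlinarith [mul_nonneg hl.le (sub_nonneg.mpr h),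
        mul_nonneg (mul_nonneg hl.le hl.le) (sub_nonneg.mpr h)]
    have hu1' : 1 < u := by
      by_contra h
      push_neg at h
      nlinarith [mul_nonneg hu0.le (sub_nonneg.mpr h),
        mul_nonneg (mul_nonneg hu0.le hu0.le) (sub_nonneg.mpr h)]
    have hul : u = l := by
      have hfac2 : (u - l) * (u ^ 2 + u * l + l ^ 2 - 1) = 0 := by
        linear_combination hu3 - hl3
      have hpos : 0 < u ^ 2 + u * l + l ^ 2 - 1 := by nlinarith
      have := (mul_eq_zero.mp hfac2).resolve_right (by linarith)
      linarith
    rw [hul] at hu1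
    have hml : (3 * l + 1 / l) * l = 3 * l ^ 2 + 1 := by field_simp
    linarith [mul_lt_mul_of_pos_right hK hl]
  · -- x + y = K t
    have hxy : x + y = K * t := by linarith
    have hA : x * y + t ^ 2 = 0 := by linear_combination h1 - y * hxy
    by_cases ht : t = 0
    · subst ht
      have hxy0 : x * y = 0 := by linarith [hA]
      rcases mul_eq_zero.mp hxy0 with hx0 | hy0
      · exact hne' ⟨hx0, by linarith [hxy], rfl⟩
      · exact hne' ⟨by linarith [hxy], hy0, rfl⟩
    · have key : (3 * K + 3 * d) * t ^ 2 = 0 := by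
        linear_combination h3 - 2 * t * hxy + K * hA
      have ht2 : (0:ℝ) < t ^ 2 := by positivity
      nlinarith
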